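/- Let G be a strongly regular graph with parameters (v, k, λ, μ) of diameter 2 (i.e., connected and not complete), and set C(k) = min{(5/16)·k, (2/(1+√2))·√k}. With φ_0 = v − 1 and φ_1 = (v − 1 − k)/(k − λ − 1), one has (φ_0 + φ_1)/φ_0 < 1 + 1/C(k). (Equivalently, the ratio of the electric resistance between vertices at distance 2 to that between adjacent vertices is less than 1 + 1/C(k).) -/

import Mathlib

open Finset

lemma srg_aux {V : Type*} [Fintype V] [DecidableEq V] (G : SimpleGraph V)
    [DecidableRel G.Adj] (v k l m : ℕ) (hG : G.IsSRGWith v k l m)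
    (hm : 1 ≤ m) (hkv : k + 1 < v) : 2 * l + 3 ≤ k + m ∧ l + 2 ≤ k := by
  have hcardV : Fintype.card V = v := hG.card
  have hVpos : 0 < Fintype.card V := by omega
  obtain ⟨x⟩ := Fintype.card_pos_iff.mp hVpos
  have hins : (insert x (G.neighborFinset x)).card ≤ k + 1 := by
    simpa [G.card_neighborFinset_eq_degree, hG.regular x] using
      Finset.card_insert_le x (G.neighborFinset x)
  have hcompl : ((insert x (G.neighborFinset x))ᶜ : Finset V).Nonempty := by
    rw [← Finset.card_pos, Finset.card_compl, hcardV]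
    omega
  obtain ⟨z, hz⟩ := hcompl
  simp only [Finset.mem_compl, Finset.mem_insert, SimpleGraph.mem_neighborFinset,
    not_or] at hz
  obtain ⟨hzx, hxz⟩ := hz
  have hxz' : ¬ G.Adj x z := hxz
  have hxne : x ≠ z := fun h => hzx h.symm
  have hAcard : Fintype.card (G.commonNeighbors x z) = m := hG.of_not_adj hxne hxz'
  have hApos : 0 < Fintype.card (G.commonNeighbors x z) := by omega
  obtain ⟨⟨y, hy⟩⟩ := Fintype.card_pos_iff.mp hApos
  rw [SimpleGraph.mem_commonNeighbors] at hy
  obtain ⟨hxy, hzy⟩ := hy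
  -- Finsets
  set A : Finset V := (G.commonNeighbors x z).toFinset with hA
  set S : Finset V := (G.commonNeighbors z y).toFinset with hS
  set B : Finset V := G.neighborFinset y \ insert x (G.neighborFinset x) with hB
  have hAcard' : A.card = m := by rw [hA, Set.toFinset_card, hAcard]
  have hScard : S.card = l := by rw [hS, Set.toFinset_card, hG.of_adj z y hzy]
  have hyA : y ∈ A := by
    rw [hA, Set.mem_toFinset, SimpleGraph.mem_commonNeighbors]
    exact ⟨hxy, hzy⟩
  have hzB : z ∈ B := by
    rw [hB, Finset.mem_sdiff, SimpleGraph.mem_neighborFinset]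
    refine ⟨hzy.symm, ?_⟩
    simp only [Finset.mem_insert, SimpleGraph.mem_neighborFinset, not_or]
    exact ⟨hzx, hxz⟩
  -- card of B
  have hinter : G.neighborFinset y ∩ insert x (G.neighborFinset x) =
      insert x ((G.commonNeighbors y x).toFinset) := by
    ext s
    simp only [Finset.mem_inter, Finset.mem_insert, SimpleGraph.mem_neighborFinset,
      Set.mem_toFinset, SimpleGraph.mem_commonNeighbors, SimpleGraph.mem_neighborSet]
    constructor
    · rintro ⟨h1, h2 | h2⟩
      · exact Or.inl h2
      · exact Or.inr ⟨h1, h2⟩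
    · rintro (rfl | ⟨h1, h2⟩)
      · exact ⟨hxy.symm, Or.inl rfl⟩
      · exact ⟨h1, Or.inr h2⟩
  have hintercard : (G.neighborFinset y ∩ insert x (G.neighborFinset x)).card = l + 1 := by
    rw [hinter, Finset.card_insert_of_notMem, Set.toFinset_card,
      hG.of_adj y x hxy.symm]
    rw [Set.mem_toFinset, SimpleGraph.mem_commonNeighbors]
    intro h
    exact G.irrefl h.2
  have hBcard : B.card + (l + 1) = k := by
    rw [hB, ← hintercard, Finset.card_sdiff_add_card_inter,
      G.card_neighborFinset_eq_degree, hG.regular y]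
  have hBpos : 1 ≤ B.card := Finset.card_pos.mpr ⟨z, hzB⟩
  -- subset claim
  have hsub : S ⊆ (A.erase y) ∪ (B.erase z) := by
    intro s hs
    rw [hS, Set.mem_toFinset, SimpleGraph.mem_commonNeighbors] at hs
    obtain ⟨hzs, hys⟩ := hs
    rw [Finset.mem_union]
    by_cases hxs : G.Adj x s
    · left
      rw [Finset.mem_erase]
      refine ⟨fun h => G.irrefl (h ▸ hys), ?_⟩
      rw [hA, Set.mem_toFinset, SimpleGraph.mem_commonNeighbors]
      exact ⟨hxs, hzs⟩
    · right
      rw [Finset.mem_erase]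
      refine ⟨fun h => G.irrefl (h ▸ hzs), ?_⟩
      rw [hB, Finset.mem_sdiff, SimpleGraph.mem_neighborFinset]
      refine ⟨hys, ?_⟩
      simp only [Finset.mem_insert, SimpleGraph.mem_neighborFinset, not_or]
      refine ⟨fun h => hxz' (h ▸ hzs).symm, hxs⟩
  have hle : S.card ≤ (A.erase y).card + (B.erase z).card :=
    le_trans (Finset.card_le_card hsub) (Finset.card_union_le _ _)
  rw [Finset.card_erase_of_mem hyA, Finset.card_erase_of_mem hzB, hAcard', hScard] at hle
  omega

theorem srg_resistance_ratio_lt {V : Type*} [Fintype V] [DecidableEq V] (G : SimpleGraph V)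
    [DecidableRel G.Adj] (v k l m : ℕ) (hG : G.IsSRGWith v k l m)
    (hm : 1 ≤ m) (hkv : k + 1 < v) :
    ((v : ℝ) - 1 + ((v : ℝ) - 1 - k) / ((k : ℝ) - l - 1)) / ((v : ℝ) - 1) <
      1 + 1 / min ((5 / 16 : ℝ) * k) (2 / (1 + Real.sqrt 2) * Real.sqrt k) := by
  obtain ⟨hkey, hlk⟩ := srg_aux G v k l m hG hm hkv
  have hparam : k * (k - l - 1) = (v - k - 1) * m := SimpleGraph.IsSRGWith.param_eq G hG (show 0 < v by omega)
  -- real versions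
  have hparamR : (k : ℝ) * ((k : ℝ) - l - 1) = ((v : ℝ) - k - 1) * m := by
    have h1 : ((k - l - 1 : ℕ) : ℝ) = (k : ℝ) - l - 1 := by
      rw [Nat.cast_sub (by omega : 1 ≤ k - l), Nat.cast_sub (by omega : l ≤ k), Nat.cast_one]
    have h2 : ((v - k - 1 : ℕ) : ℝ) = (v : ℝ) - k - 1 := by
      rw [Nat.cast_sub (by omega : 1 ≤ v - k), Nat.cast_sub (by omega : k ≤ v), Nat.cast_one]
    have := congrArg (fun n : ℕ => (n : ℝ)) hparam
    push_cast at this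
    rw [h1, h2] at this
    exact this
  have hkeyR : 2 * (l : ℝ) + 3 ≤ (k : ℝ) + m := by exact_mod_cast hkey
  have hlkR : (l : ℝ) + 2 ≤ (k : ℝ) := by exact_mod_cast hlk
  have hk2 : (2 : ℝ) ≤ k := by
    have : 2 ≤ k := by omega
    exact_mod_cast this
  have hm1 : (1 : ℝ) ≤ m := by exact_mod_cast hm
  have hkvR : (k : ℝ) + 1 < v := by exact_mod_cast hkv
  set B : ℝ := (k : ℝ) - l - 1 with hBdef
  have hBpos : 0 < B := by simp only [hBdef]; linarith
  have hv1 : (0 : ℝ) < (v : ℝ) - 1 := by linarith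
  have hvk : (0 : ℝ) < (v : ℝ) - 1 - k := by linarith
  set C : ℝ := min ((5 / 16 : ℝ) * k) (2 / (1 + Real.sqrt 2) * Real.sqrt k) with hCdef
  have hsqrt2 : (0 : ℝ) < 1 + Real.sqrt 2 := by positivity
  have hsqrtk : (0 : ℝ) < Real.sqrt k := Real.sqrt_pos.mpr (by linarith)
  have hCpos : 0 < C := by
    apply lt_min
    · nlinarith
    · positivity
  have hCle : C ≤ (5 / 16 : ℝ) * k := min_le_left _ _
  have hClt : C < m + B := by
    have : (5 / 16 : ℝ) * k < m + B := by
      simp only [hBdef]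
      nlinarith
    linarith
  -- main reduction
  have hmain : ((v : ℝ) - 1 - k) / (B * ((v : ℝ) - 1)) < 1 / C := by
    rw [div_lt_div_iff₀ (by positivity) hCpos]
    have hexp : ((v : ℝ) - 1) * B = ((v : ℝ) - 1 - k) * (m + B) := by
      have : (k : ℝ) * B = ((v : ℝ) - 1 - k) * m := by
        rw [hBdef, hparamR]; ring
      nlinarith [this]
    calc ((v : ℝ) - 1 - k) * C < ((v : ℝ) - 1 - k) * (m + B) := by
          exact mul_lt_mul_of_pos_left hClt hvk
      _ = 1 * (B * ((v : ℝ) - 1)) := by rw [← hexp]; ring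
  have heq : ((v : ℝ) - 1 + ((v : ℝ) - 1 - k) / B) / ((v : ℝ) - 1) =
      1 + ((v : ℝ) - 1 - k) / (B * ((v : ℝ) - 1)) := by
    field_simp
  rw [heq]
  exact add_lt_add_right hmain 1
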